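/- Let p > 3 be a prime and let G = Φ₃₇(1⁶) be the group of order p⁶ with presentation on generators α, α₁, α₂, α₃, α₄, α₅ and relations [αᵢ,α] = αᵢ₊₁ for i = 1,2,3, [α₂,α₃] = α₅, [α₃,α₁] = α₅, [α₄,α₁] = α₅, αᵖ = α₁ᵖ = α₂ᵖ = α₃ᵖ = α₄ᵖ = α₅ᵖ = 1, with every commutator of a pair of generators not listed among these relations declared trivial. Then the Bogomolov multiplier B₀(G) is trivial. -/

import Mathlib

/-!
Φ₃₇(1⁶): relations [αᵢ,α]=αᵢ₊₁ (i=1,2,3), [α₂,α₃]=α₅, [α₃,α₁]=α₅, [α₄,α₁]=α₅,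
all pth powers trivial.
-/

namespace Stmt12

/-- The additive group `ℚ/ℤ`. -/
abbrev QZ : Type := ℚ ⧸ AddSubgroup.zmultiples (1 : ℚ)

/-- An inhomogeneous 2-cocycle on `G` with values in `ℚ/ℤ` (trivial `G`-action). -/
def IsTwoCocycle {G : Type} [Group G] (f : G → G → QZ) : Prop :=
  ∀ g h j : G, f h j - f (g * h) j + f g (h * j) - f g h = 0

/-- An inhomogeneous 2-coboundary on `G` with values in `ℚ/ℤ` (trivial `G`-action). -/
def IsTwoCoboundary {G : Type} [Group G] (f : G → G → QZ) : Prop :=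
  ∃ c : G → QZ, ∀ g h : G, f g h = c h - c (g * h) + c g

/-- A subgroup is bicyclic if it is abelian and generated by at most two elements
(equivalently, cyclic or a direct product of two cyclic groups). -/
def IsBicyclic {G : Type} [Group G] (A : Subgroup G) : Prop :=
  (∀ x y : A, x * y = y * x) ∧ ∃ a b : G, A = Subgroup.closure {a, b}

/-- The Bogomolov multiplier `B₀(G) ⊆ H²(G, ℚ/ℤ)` is trivial, phrased at the level of
2-cocycles: every 2-cocycle whose restriction to each bicyclic subgroup is a coboundary
(i.e. whose class restricts to zero on each bicyclic subgroup) is itself a coboundary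
(i.e. its class is zero). -/
def BogomolovMultiplierIsTrivial (G : Type) [Group G] : Prop :=
  ∀ f : G → G → QZ, IsTwoCocycle f →
    (∀ A : Subgroup G, IsBicyclic A → IsTwoCoboundary (fun a b : ↥A => f ↑a ↑b)) →
    IsTwoCoboundary f

/-- The Bogomolov multiplier `B₀(G) ⊆ H²(G, ℚ/ℤ)` is nontrivial, phrased at the level of
2-cocycles. -/
def BogomolovMultiplierIsNontrivial (G : Type) [Group G] : Prop :=
  ∃ f : G → G → QZ, IsTwoCocycle f ∧
    (∀ A : Subgroup G, IsBicyclic A → IsTwoCoboundary (fun a b : ↥A => f ↑a ↑b)) ∧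
    ¬ IsTwoCoboundary f

/-- The generators. -/
inductive Gen | a | a1 | a2 | a3 | a4 | a5

open FreeGroup

/-- The commutator `[x,y] = x⁻¹y⁻¹xy`. -/
def c (x y : FreeGroup Gen) : FreeGroup Gen := x⁻¹ * y⁻¹ * x * y

/-- The defining relators. -/
def rels (p : ℕ) : Set (FreeGroup Gen) :=
  { c (of .a1) (of .a) * (of Gen.a2)⁻¹,
    c (of .a2) (of .a) * (of Gen.a3)⁻¹,
    c (of .a3) (of .a) * (of Gen.a4)⁻¹,
    c (of .a2) (of .a3) * (of Gen.a5)⁻¹,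
    c (of .a3) (of .a1) * (of Gen.a5)⁻¹,
    c (of .a4) (of .a1) * (of Gen.a5)⁻¹,
    c (of .a) (of .a4),
    c (of .a) (of .a5),
    c (of .a1) (of .a2),
    c (of .a1) (of .a5),
    c (of .a2) (of .a4),
    c (of .a2) (of .a5),
    c (of .a3) (of .a4),
    c (of .a3) (of .a5),
    c (of .a4) (of .a5),
    (of Gen.a) ^ p,
    (of Gen.a1) ^ p,
    (of Gen.a2) ^ p,
    (of Gen.a3) ^ p,
    (of Gen.a4) ^ p,
    (of Gen.a5) ^ p }

/-! ### Auxiliary commutator calculus -/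

section Cm
variable {H : Type*} [Group H]

def cmm (x y : H) : H := x⁻¹ * y⁻¹ * x * y

lemma commute_iff_cmm {x y : H} : Commute x y ↔ cmm x y = 1 := by
  unfold cmm
  constructor
  · intro h
    have h' : x * y = y * x := h.eq
    rw [show x⁻¹ * y⁻¹ * x * y = x⁻¹ * y⁻¹ * (x * y) by group, h']
    group
  · intro h
    have := congrArg (fun z => y * x * z) h
    simp only [mul_one] at this
    rw [show y * x * (x⁻¹ * y⁻¹ * x * y) = x * y by group] at this
    exact this

lemma cmm_swap (x y : H) : cmm y x = (cmm x y)⁻¹ := by unfold cmm; group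

lemma cmm_mul_right (x u v : H) : cmm x (u*v) = cmm x v * (v⁻¹ * cmm x u * v) := by
  unfold cmm; group

lemma cmm_mul_left (u v z : H) : cmm (u*v) z = (v⁻¹ * cmm u z * v) * cmm v z := by
  unfold cmm; group

lemma cmm_inv_left (u z : H) : cmm u⁻¹ z = u * (cmm u z)⁻¹ * u⁻¹ := by
  unfold cmm; group

lemma cmm_one_right (x : H) : cmm x 1 = 1 := by unfold cmm; group

lemma conj_eq_of_commute {v w : H} (h : Commute w v) : v⁻¹ * w * v = w := by
  have h' : w * v = v * w := h.eq
  rw [show v⁻¹ * w * v = v⁻¹ * (w * v) by group, h']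
  group

lemma conj_eq_of_commute' {v w : H} (h : Commute w v) : v * w * v⁻¹ = w := by
  rw [h.symm.eq]
  group

lemma conj_pow' (v w : H) (n : ℕ) : v⁻¹ * w ^ n * v = (v⁻¹ * w * v) ^ n := by
  induction n with
  | zero => simp
  | succ m ih => rw [pow_succ, pow_succ, ← ih]; group

lemma cmm_pow1 {x y : H} (h : Commute (cmm x y) y) (n : ℕ) :
    cmm x (y ^ n) = (cmm x y) ^ n := by
  induction n with
  | zero => simp [cmm_one_right]
  | succ n ih =>
    rw [pow_succ, cmm_mul_right, ih, conj_pow', conj_eq_of_commute h, pow_succ']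

lemma pow_swap {c1 c2 u : H} (hr : c2 * c1 = c1 * (c2 * u)) (huc2 : Commute u c2) (m : ℕ) :
    c2 ^ m * c1 = c1 * c2 ^ m * u ^ m := by
  induction m with
  | zero => simp
  | succ m ih =>
    rw [show c2 ^ (m+1) * c1 = c2 ^ m * (c2 * c1) by rw [pow_succ]; group, hr,
      show c2 ^ m * (c1 * (c2 * u)) = (c2 ^ m * c1) * c2 * u by group, ih,
      show c1 * c2 ^ m * u ^ m * c2 * u = c1 * c2 ^ m * (u ^ m * c2) * u by group,
      (huc2.pow_left m).eq, pow_succ c2, pow_succ u]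
    group

lemma mul_pow_choose {c1 c2 u : H} (hr : c2 * c1 = c1 * (c2 * u))
    (huc1 : Commute u c1) (huc2 : Commute u c2) (n : ℕ) :
    (c1 * c2) ^ n = c1 ^ n * c2 ^ n * u ^ (n.choose 2) := by
  induction n with
  | zero => simp
  | succ n ih =>
    rw [pow_succ, ih,
      show c1 ^ n * c2 ^ n * u ^ n.choose 2 * (c1 * c2)
        = c1 ^ n * (c2 ^ n * (u ^ n.choose 2 * c1)) * c2 by group,
      (huc1.pow_left _).eq,
      show c1 ^ n * (c2 ^ n * (c1 * u ^ n.choose 2)) * c2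
        = c1 ^ n * (c2 ^ n * c1) * u ^ n.choose 2 * c2 by group,
      pow_swap hr huc2 n,
      show c1 ^ n * (c1 * c2 ^ n * u ^ n) * u ^ n.choose 2 * c2
        = c1 ^ n * c1 * c2 ^ n * ((u ^ n * u ^ n.choose 2) * c2) by group,
      ← pow_add, (huc2.pow_left _).eq,
      show (n+1).choose 2 = n + n.choose 2 by
        rw [Nat.choose_succ_succ]; simp [Nat.choose_one_right],
      pow_succ c1, pow_succ c2, pow_add u]
    group

lemma cmm_pow2 {x y c1 c2 : H} (e1 : c1 = cmm x y) (e2 : c2 = cmm c1 y)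
    (h2y : Commute c2 y) (h21 : Commute c2 c1) (n : ℕ) :
    cmm x (y ^ n) = c1 ^ n * c2 ^ (n.choose 2) := by
  induction n with
  | zero => simp [cmm_one_right]
  | succ n ih =>
    have hcy : y⁻¹ * c1 * y = c1 * c2 := by rw [e2]; unfold cmm; group
    rw [pow_succ, cmm_mul_right, ih, ← e1,
      show y⁻¹ * (c1 ^ n * c2 ^ n.choose 2) * y
        = (y⁻¹ * c1 ^ n * y) * (y⁻¹ * c2 ^ n.choose 2 * y) by group,
      conj_pow', conj_pow', hcy, conj_eq_of_commute h2y,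
      (h21.symm.mul_pow n),
      show c1 * (c1 ^ n * c2 ^ n * c2 ^ n.choose 2)
        = (c1 * c1 ^ n) * (c2 ^ n * c2 ^ n.choose 2) by group,
      ← pow_succ', ← pow_add,
      show (n+1).choose 2 = n + n.choose 2 by
        rw [Nat.choose_succ_succ]; simp [Nat.choose_one_right]]

lemma cmm_pow3 {x y c1 c2 c3 u : H} (e1 : c1 = cmm x y) (e2 : c2 = cmm c1 y)
    (e3 : c3 = cmm c2 y) (eu : u = cmm c2 c1)
    (h3y : Commute c3 y) (h32 : Commute c3 c2)
    (huy : Commute u y) (hu1 : Commute u c1) (hu2 : Commute u c2) (hu3 : Commute u c3)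
    (n : ℕ) :
    cmm x (y ^ n) = c1 ^ n * c2 ^ (n.choose 2) * (c3 ^ (n.choose 3) * u ^ (n.choose 3)) := by
  induction n with
  | zero => simp [cmm_one_right]
  | succ n ih =>
    have hcy : y⁻¹ * c1 * y = c1 * c2 := by rw [e2]; unfold cmm; group
    have hc2y : y⁻¹ * c2 * y = c2 * c3 := by rw [e3]; unfold cmm; group
    have hr : c2 * c1 = c1 * (c2 * u) := by rw [eu]; unfold cmm; group
    rw [pow_succ, cmm_mul_right, ih, ← e1,
      show y⁻¹ * (c1 ^ n * c2 ^ n.choose 2 * (c3 ^ n.choose 3 * u ^ n.choose 3)) * y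
        = (y⁻¹ * c1 ^ n * y) * (y⁻¹ * c2 ^ n.choose 2 * y)
          * ((y⁻¹ * c3 ^ n.choose 3 * y) * (y⁻¹ * u ^ n.choose 3 * y)) by group,
      conj_pow', conj_pow', conj_pow', conj_pow', hcy, hc2y,
      conj_eq_of_commute h3y, conj_eq_of_commute huy,
      mul_pow_choose hr hu1 hu2 n, (h32.symm.mul_pow _),
      show c1 * (c1 ^ n * c2 ^ n * u ^ n.choose 2 * (c2 ^ n.choose 2 * c3 ^ n.choose 2)
          * (c3 ^ n.choose 3 * u ^ n.choose 3))
        = (c1 * c1 ^ n) * c2 ^ n * ((u ^ n.choose 2 * c2 ^ n.choose 2)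
          * (c3 ^ n.choose 2 * c3 ^ n.choose 3) * u ^ n.choose 3) by group,
      (hu2.pow_pow _ _).eq, ← pow_add,
      show (c1 * c1 ^ n) * c2 ^ n * (c2 ^ n.choose 2 * u ^ n.choose 2
          * c3 ^ (n.choose 2 + n.choose 3) * u ^ n.choose 3)
        = (c1 * c1 ^ n) * (c2 ^ n * c2 ^ n.choose 2) * ((u ^ n.choose 2
          * c3 ^ (n.choose 2 + n.choose 3)) * u ^ n.choose 3) by group,
      (hu3.pow_pow _ _).eq, ← pow_succ', ← pow_add,
      show c3 ^ (n.choose 2 + n.choose 3) * u ^ n.choose 2 * u ^ n.choose 3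
        = c3 ^ (n.choose 2 + n.choose 3) * (u ^ n.choose 2 * u ^ n.choose 3) by group,
      ← pow_add,
      show (n+1).choose 2 = n + n.choose 2 by
        rw [Nat.choose_succ_succ]; simp [Nat.choose_one_right],
      show (n+1).choose 3 = n.choose 2 + n.choose 3 from Nat.choose_succ_succ n 2]

end Cm

lemma map_c {K : Type*} [Group K] (φ : FreeGroup Gen →* K) (u v : FreeGroup Gen) :
    φ (c u v) = cmm (φ u) (φ v) := by
  unfold c cmm
  rw [_root_.map_mul, _root_.map_mul, _root_.map_mul, _root_.map_inv, _root_.map_inv]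

/-! ### divisibility of QZ -/

lemma QZ_divisible (n : ℕ) (hn : n ≠ 0) (v : QZ) : ∃ u : QZ, n • u = v := by
  induction v using QuotientAddGroup.induction_on with
  | H q =>
    refine ⟨QuotientAddGroup.mk (q / n), ?_⟩
    have : (n : ℕ) • (QuotientAddGroup.mk (q / n) : QZ)
        = QuotientAddGroup.mk (n • (q / n)) := by
      exact (map_nsmul (QuotientAddGroup.mk' _) _ _).symm
    rw [this]
    congr 1
    rw [nsmul_eq_mul, mul_div_cancel₀]
    exact_mod_cast Nat.cast_ne_zero.mpr hn

/-! ### closure of commuting pair is commutative -/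

section Closure
variable {G : Type} [Group G]

lemma closure_pair_comm {x y : G} (h : Commute x y) :
    ∀ u ∈ Subgroup.closure ({x, y} : Set G), ∀ v ∈ Subgroup.closure ({x, y} : Set G),
      Commute u v := by
  have hS : ∀ s ∈ ({x, y} : Set G), ∀ u ∈ Subgroup.closure ({x, y} : Set G), Commute s u := by
    intro s hs u hu
    have hle : Subgroup.closure ({x, y} : Set G) ≤ Subgroup.centralizer {s} := by
      rw [Subgroup.closure_le]
      intro t ht
      rw [SetLike.mem_coe, Subgroup.mem_centralizer_iff]
      intro g hg
      rcases hg with rfl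
      rcases hs with rfl | rfl <;> rcases ht with rfl | rfl
      · rfl
      · exact h.eq
      · exact h.symm.eq
      · rfl
    have := hle hu
    rw [Subgroup.mem_centralizer_iff] at this
    exact this s rfl
  intro u hu v hv
  have hle : Subgroup.closure ({x, y} : Set G) ≤ Subgroup.centralizer {v} := by
    rw [Subgroup.closure_le]
    intro t ht
    rw [SetLike.mem_coe, Subgroup.mem_centralizer_iff]
    intro g hg
    rcases hg with rfl
    exact (hS t ht g hv).symm.eq
  have := hle hu
  rw [Subgroup.mem_centralizer_iff] at this
  exact (this v rfl).symm

end Closure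

/-! ### the central extension associated with a cocycle -/

section ExtSec
variable {G : Type} [Group G]

lemma cocycle_one_left {f : G → G → QZ} (hf : IsTwoCocycle f) (g : G) : f 1 g = f 1 1 := by
  have h1 := hf 1 1 g
  simp only [one_mul] at h1
  rw [show f 1 g - f 1 g + f 1 g - f 1 1 = f 1 g - f 1 1 by abel] at h1
  exact sub_eq_zero.mp h1

lemma cocycle_one_right {f : G → G → QZ} (hf : IsTwoCocycle f) (g : G) : f g 1 = f 1 1 := by
  have h1 := hf g 1 1
  simp only [mul_one, one_mul] at h1
  rw [show f 1 1 - f g 1 + f g 1 - f g 1 = f 1 1 - f g 1 by abel] at h1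
  exact (sub_eq_zero.mp h1).symm

@[ext] structure Ext (f : G → G → QZ) (hf : IsTwoCocycle f) : Type where
  g : G
  z : QZ

namespace Ext

variable {f : G → G → QZ} {hf : IsTwoCocycle f}

instance : Group (Ext f hf) where
  mul x y := ⟨x.g * y.g, x.z + y.z + f x.g y.g⟩
  one := ⟨1, - f 1 1⟩
  inv x := ⟨x.g⁻¹, - f 1 1 - x.z - f x.g⁻¹ x.g⟩
  mul_assoc x y z := by
    have h := hf x.g y.g z.g
    have key : f x.g y.g + f (x.g * y.g) z.g = f y.g z.g + f x.g (y.g * z.g) := by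
      have h' : (f y.g z.g + f x.g (y.g * z.g)) - (f x.g y.g + f (x.g * y.g) z.g) = 0 := by
        rw [← h]; abel
      exact (sub_eq_zero.mp h').symm
    apply Ext.ext
    · exact mul_assoc x.g y.g z.g
    · show (x.z + y.z + f x.g y.g) + z.z + f (x.g * y.g) z.g
        = x.z + (y.z + z.z + f y.g z.g) + f x.g (y.g * z.g)
      calc (x.z + y.z + f x.g y.g) + z.z + f (x.g * y.g) z.g
          = x.z + y.z + z.z + (f x.g y.g + f (x.g * y.g) z.g) := by abel
        _ = x.z + y.z + z.z + (f y.g z.g + f x.g (y.g * z.g)) := by rw [key]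
        _ = x.z + (y.z + z.z + f y.g z.g) + f x.g (y.g * z.g) := by abel
  one_mul x := by
    apply Ext.ext
    · exact one_mul x.g
    · show (- f 1 1) + x.z + f 1 x.g = x.z
      rw [cocycle_one_left hf x.g]; abel
  mul_one x := by
    apply Ext.ext
    · exact mul_one x.g
    · show x.z + (- f 1 1) + f x.g 1 = x.z
      rw [cocycle_one_right hf x.g]; abel
  inv_mul_cancel x := by
    apply Ext.ext
    · exact inv_mul_cancel x.g
    · show (- f 1 1 - x.z - f x.g⁻¹ x.g) + x.z + f x.g⁻¹ x.g = - f 1 1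
      abel

@[simp] lemma mul_g (x y : Ext f hf) : (x * y).g = x.g * y.g := rfl
@[simp] lemma mul_z (x y : Ext f hf) : (x * y).z = x.z + y.z + f x.g y.g := rfl
@[simp] lemma one_g : (1 : Ext f hf).g = 1 := rfl
@[simp] lemma one_z : (1 : Ext f hf).z = - f 1 1 := rfl
@[simp] lemma inv_g (x : Ext f hf) : (x⁻¹).g = x.g⁻¹ := rfl

def π : Ext f hf →* G where
  toFun := Ext.g
  map_one' := rfl
  map_mul' _ _ := rfl

@[simp] lemma π_apply (x : Ext f hf) : π x = x.g := rfl

@[simp] lemma pow_g (x : Ext f hf) (n : ℕ) : (x ^ n).g = x.g ^ n := by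
  induction n with
  | zero => rw [pow_zero, pow_zero, one_g]
  | succ n ih => rw [pow_succ, pow_succ, mul_g, ih]

@[simp] lemma cmm_g (x y : Ext f hf) : (cmm x y).g = cmm x.g y.g := rfl

lemma pow_z (x : Ext f hf) (n : ℕ) :
    (x ^ n).z = n • x.z + ((⟨x.g, 0⟩ : Ext f hf) ^ n).z := by
  induction n with
  | zero => rw [pow_zero, pow_zero, zero_nsmul, zero_add]
  | succ n ih =>
    rw [pow_succ, mul_z, ih, pow_succ, mul_z, pow_g, pow_g]
    rw [succ_nsmul]
    abel

lemma exists_lift (a : G) (n : ℕ) (hn : n ≠ 0) (ha : a ^ n = 1) :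
    ∃ A : Ext f hf, A.g = a ∧ A ^ n = 1 := by
  obtain ⟨u, hu⟩ := QZ_divisible n hn (- f 1 1 - ((⟨a, 0⟩ : Ext f hf) ^ n).z)
  refine ⟨⟨a, u⟩, rfl, ?_⟩
  apply Ext.ext
  · rw [pow_g]; exact ha
  · rw [pow_z, one_z]
    show n • u + ((⟨a, 0⟩ : Ext f hf) ^ n).z = - f 1 1
    rw [hu]; abel

end Ext
end ExtSec

theorem bogomolov_trivial_Phi37 (p : ℕ) (hp : p.Prime) (h3 : 3 < p)
    (hcard : Nat.card (PresentedGroup (rels p)) = p ^ 6) :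
    BogomolovMultiplierIsTrivial (PresentedGroup (rels p)) := by
  intro f hf hbic
  have hp0 : p ≠ 0 := hp.ne_zero
  -- symmetry of f on commuting pairs
  have hsym : ∀ x y : PresentedGroup (rels p), Commute x y → f x y = f y x := by
    intro x y hc
    have hab : IsBicyclic (Subgroup.closure ({x, y} : Set (PresentedGroup (rels p)))) := by
      refine ⟨?_, x, y, rfl⟩
      intro u v
      exact Subtype.ext (closure_pair_comm hc u.1 u.2 v.1 v.2).eq
    obtain ⟨cb, hcb⟩ := hbic _ hab
    have hx : x ∈ Subgroup.closure ({x, y} : Set (PresentedGroup (rels p))) :=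
      Subgroup.subset_closure (by left; rfl)
    have hy : y ∈ Subgroup.closure ({x, y} : Set (PresentedGroup (rels p))) :=
      Subgroup.subset_closure (by right; rfl)
    have h1 : f x y = cb ⟨y, hy⟩ - cb (⟨x, hx⟩ * ⟨y, hy⟩) + cb ⟨x, hx⟩ := hcb ⟨x, hx⟩ ⟨y, hy⟩
    have h2 : f y x = cb ⟨x, hx⟩ - cb (⟨y, hy⟩ * ⟨x, hx⟩) + cb ⟨y, hy⟩ := hcb ⟨y, hy⟩ ⟨x, hx⟩
    have hxy : (⟨x, hx⟩ * ⟨y, hy⟩ : Subgroup.closure ({x, y} : Set (PresentedGroup (rels p))))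
        = ⟨y, hy⟩ * ⟨x, hx⟩ := Subtype.ext hc.eq
    rw [hxy] at h1
    rw [h1, h2]
    abel
  -- commuting lifts
  have hC : ∀ x y : Ext f hf, Commute x.g y.g → Commute x y := by
    intro x y h
    show x * y = y * x
    apply Ext.ext
    · exact h.eq
    · show x.z + y.z + f x.g y.g = y.z + x.z + f y.g x.g
      rw [hsym _ _ h]; abel
  -- relators hold in G
  have hrel : ∀ r ∈ rels p, PresentedGroup.mk (rels p) r = 1 := fun r hr =>
    (QuotientGroup.eq_one_iff r).mpr (Subgroup.subset_normalClosure hr)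
  -- generators of G
  set a : PresentedGroup (rels p) := PresentedGroup.mk (rels p) (of Gen.a) with ha_def
  set a1 : PresentedGroup (rels p) := PresentedGroup.mk (rels p) (of Gen.a1) with ha1_def
  set a2 : PresentedGroup (rels p) := PresentedGroup.mk (rels p) (of Gen.a2) with ha2_def
  set a3 : PresentedGroup (rels p) := PresentedGroup.mk (rels p) (of Gen.a3) with ha3_def
  set a4 : PresentedGroup (rels p) := PresentedGroup.mk (rels p) (of Gen.a4) with ha4_def
  set a5 : PresentedGroup (rels p) := PresentedGroup.mk (rels p) (of Gen.a5) with ha5_def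
  -- extraction of defining relations
  have hr1 : cmm a1 a = a2 := by
    have h := hrel _ (show (c (of Gen.a1) (of Gen.a) * (of Gen.a2)⁻¹) ∈ rels p by
      unfold rels; exact Set.mem_insert _ _)
    rw [_root_.map_mul, map_c, _root_.map_inv] at h
    exact mul_inv_eq_one.mp h
  have hr2 : cmm a2 a = a3 := by
    have h := hrel _ (show (c (of Gen.a2) (of Gen.a) * (of Gen.a3)⁻¹) ∈ rels p by
      unfold rels; exact Set.mem_insert_of_mem _ (Set.mem_insert _ _))
    rw [_root_.map_mul, map_c, _root_.map_inv] at h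
    exact mul_inv_eq_one.mp h
  have hr3 : cmm a3 a = a4 := by
    have h := hrel _ (show (c (of Gen.a3) (of Gen.a) * (of Gen.a4)⁻¹) ∈ rels p by
      unfold rels; exact Set.mem_insert_of_mem _ (Set.mem_insert_of_mem _ (Set.mem_insert _ _)))
    rw [_root_.map_mul, map_c, _root_.map_inv] at h
    exact mul_inv_eq_one.mp h
  have hr4 : cmm a2 a3 = a5 := by
    have h := hrel _ (show (c (of Gen.a2) (of Gen.a3) * (of Gen.a5)⁻¹) ∈ rels p by
      unfold rels; exact Set.mem_insert_of_mem _ (Set.mem_insert_of_mem _ (Set.mem_insert_of_mem _ (Set.mem_insert _ _))))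
    rw [_root_.map_mul, map_c, _root_.map_inv] at h
    exact mul_inv_eq_one.mp h
  have hr5 : cmm a3 a1 = a5 := by
    have h := hrel _ (show (c (of Gen.a3) (of Gen.a1) * (of Gen.a5)⁻¹) ∈ rels p by
      unfold rels; exact Set.mem_insert_of_mem _ (Set.mem_insert_of_mem _ (Set.mem_insert_of_mem _ (Set.mem_insert_of_mem _ (Set.mem_insert _ _)))))
    rw [_root_.map_mul, map_c, _root_.map_inv] at h
    exact mul_inv_eq_one.mp h
  have hr6 : cmm a4 a1 = a5 := by
    have h := hrel _ (show (c (of Gen.a4) (of Gen.a1) * (of Gen.a5)⁻¹) ∈ rels p by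
      unfold rels; exact Set.mem_insert_of_mem _ (Set.mem_insert_of_mem _ (Set.mem_insert_of_mem _ (Set.mem_insert_of_mem _ (Set.mem_insert_of_mem _ (Set.mem_insert _ _))))))
    rw [_root_.map_mul, map_c, _root_.map_inv] at h
    exact mul_inv_eq_one.mp h
  have hc7 : Commute a a4 := by
    have h := hrel _ (show (c (of Gen.a) (of Gen.a4)) ∈ rels p by
      unfold rels; exact Set.mem_insert_of_mem _ (Set.mem_insert_of_mem _ (Set.mem_insert_of_mem _ (Set.mem_insert_of_mem _ (Set.mem_insert_of_mem _ (Set.mem_insert_of_mem _ (Set.mem_insert _ _)))))))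
    rw [map_c] at h
    exact commute_iff_cmm.mpr h
  have hc8 : Commute a a5 := by
    have h := hrel _ (show (c (of Gen.a) (of Gen.a5)) ∈ rels p by
      unfold rels; exact Set.mem_insert_of_mem _ (Set.mem_insert_of_mem _ (Set.mem_insert_of_mem _ (Set.mem_insert_of_mem _ (Set.mem_insert_of_mem _ (Set.mem_insert_of_mem _ (Set.mem_insert_of_mem _ (Set.mem_insert _ _))))))))
    rw [map_c] at h
    exact commute_iff_cmm.mpr h
  have hc9 : Commute a1 a2 := by
    have h := hrel _ (show (c (of Gen.a1) (of Gen.a2)) ∈ rels p by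
      unfold rels; exact Set.mem_insert_of_mem _ (Set.mem_insert_of_mem _ (Set.mem_insert_of_mem _ (Set.mem_insert_of_mem _ (Set.mem_insert_of_mem _ (Set.mem_insert_of_mem _ (Set.mem_insert_of_mem _ (Set.mem_insert_of_mem _ (Set.mem_insert _ _)))))))))
    rw [map_c] at h
    exact commute_iff_cmm.mpr h
  have hc10 : Commute a1 a5 := by
    have h := hrel _ (show (c (of Gen.a1) (of Gen.a5)) ∈ rels p by
      unfold rels; exact Set.mem_insert_of_mem _ (Set.mem_insert_of_mem _ (Set.mem_insert_of_mem _ (Set.mem_insert_of_mem _ (Set.mem_insert_of_mem _ (Set.mem_insert_of_mem _ (Set.mem_insert_of_mem _ (Set.mem_insert_of_mem _ (Set.mem_insert_of_mem _ (Set.mem_insert _ _))))))))))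
    rw [map_c] at h
    exact commute_iff_cmm.mpr h
  have hc11 : Commute a2 a4 := by
    have h := hrel _ (show (c (of Gen.a2) (of Gen.a4)) ∈ rels p by
      unfold rels; exact Set.mem_insert_of_mem _ (Set.mem_insert_of_mem _ (Set.mem_insert_of_mem _ (Set.mem_insert_of_mem _ (Set.mem_insert_of_mem _ (Set.mem_insert_of_mem _ (Set.mem_insert_of_mem _ (Set.mem_insert_of_mem _ (Set.mem_insert_of_mem _ (Set.mem_insert_of_mem _ (Set.mem_insert _ _)))))))))))
    rw [map_c] at h
    exact commute_iff_cmm.mpr h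
  have hc12 : Commute a2 a5 := by
    have h := hrel _ (show (c (of Gen.a2) (of Gen.a5)) ∈ rels p by
      unfold rels; exact Set.mem_insert_of_mem _ (Set.mem_insert_of_mem _ (Set.mem_insert_of_mem _ (Set.mem_insert_of_mem _ (Set.mem_insert_of_mem _ (Set.mem_insert_of_mem _ (Set.mem_insert_of_mem _ (Set.mem_insert_of_mem _ (Set.mem_insert_of_mem _ (Set.mem_insert_of_mem _ (Set.mem_insert_of_mem _ (Set.mem_insert _ _))))))))))))
    rw [map_c] at h
    exact commute_iff_cmm.mpr h
  have hc13 : Commute a3 a4 := by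
    have h := hrel _ (show (c (of Gen.a3) (of Gen.a4)) ∈ rels p by
      unfold rels; exact Set.mem_insert_of_mem _ (Set.mem_insert_of_mem _ (Set.mem_insert_of_mem _ (Set.mem_insert_of_mem _ (Set.mem_insert_of_mem _ (Set.mem_insert_of_mem _ (Set.mem_insert_of_mem _ (Set.mem_insert_of_mem _ (Set.mem_insert_of_mem _ (Set.mem_insert_of_mem _ (Set.mem_insert_of_mem _ (Set.mem_insert_of_mem _ (Set.mem_insert _ _)))))))))))))
    rw [map_c] at h
    exact commute_iff_cmm.mpr h
  have hc14 : Commute a3 a5 := by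
    have h := hrel _ (show (c (of Gen.a3) (of Gen.a5)) ∈ rels p by
      unfold rels; exact Set.mem_insert_of_mem _ (Set.mem_insert_of_mem _ (Set.mem_insert_of_mem _ (Set.mem_insert_of_mem _ (Set.mem_insert_of_mem _ (Set.mem_insert_of_mem _ (Set.mem_insert_of_mem _ (Set.mem_insert_of_mem _ (Set.mem_insert_of_mem _ (Set.mem_insert_of_mem _ (Set.mem_insert_of_mem _ (Set.mem_insert_of_mem _ (Set.mem_insert_of_mem _ (Set.mem_insert _ _))))))))))))))
    rw [map_c] at h
    exact commute_iff_cmm.mpr h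
  have hc15 : Commute a4 a5 := by
    have h := hrel _ (show (c (of Gen.a4) (of Gen.a5)) ∈ rels p by
      unfold rels; exact Set.mem_insert_of_mem _ (Set.mem_insert_of_mem _ (Set.mem_insert_of_mem _ (Set.mem_insert_of_mem _ (Set.mem_insert_of_mem _ (Set.mem_insert_of_mem _ (Set.mem_insert_of_mem _ (Set.mem_insert_of_mem _ (Set.mem_insert_of_mem _ (Set.mem_insert_of_mem _ (Set.mem_insert_of_mem _ (Set.mem_insert_of_mem _ (Set.mem_insert_of_mem _ (Set.mem_insert_of_mem _ (Set.mem_insert _ _)))))))))))))))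
    rw [map_c] at h
    exact commute_iff_cmm.mpr h
  have hapow : a ^ p = 1 := by
    have h := hrel _ (show ((of Gen.a) ^ p) ∈ rels p by
      unfold rels; exact Set.mem_insert_of_mem _ (Set.mem_insert_of_mem _ (Set.mem_insert_of_mem _ (Set.mem_insert_of_mem _ (Set.mem_insert_of_mem _ (Set.mem_insert_of_mem _ (Set.mem_insert_of_mem _ (Set.mem_insert_of_mem _ (Set.mem_insert_of_mem _ (Set.mem_insert_of_mem _ (Set.mem_insert_of_mem _ (Set.mem_insert_of_mem _ (Set.mem_insert_of_mem _ (Set.mem_insert_of_mem _ (Set.mem_insert_of_mem _ (Set.mem_insert _ _))))))))))))))))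
    rw [_root_.map_pow] at h
    exact h
  have ha1pow : a1 ^ p = 1 := by
    have h := hrel _ (show ((of Gen.a1) ^ p) ∈ rels p by
      unfold rels; exact Set.mem_insert_of_mem _ (Set.mem_insert_of_mem _ (Set.mem_insert_of_mem _ (Set.mem_insert_of_mem _ (Set.mem_insert_of_mem _ (Set.mem_insert_of_mem _ (Set.mem_insert_of_mem _ (Set.mem_insert_of_mem _ (Set.mem_insert_of_mem _ (Set.mem_insert_of_mem _ (Set.mem_insert_of_mem _ (Set.mem_insert_of_mem _ (Set.mem_insert_of_mem _ (Set.mem_insert_of_mem _ (Set.mem_insert_of_mem _ (Set.mem_insert_of_mem _ (Set.mem_insert _ _)))))))))))))))))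
    rw [_root_.map_pow] at h
    exact h
  -- lifts of the generators
  obtain ⟨A, hAg, hAp⟩ := Ext.exists_lift (f := f) (hf := hf) a p hp0 hapow
  obtain ⟨A1, hA1g, hA1p⟩ := Ext.exists_lift (f := f) (hf := hf) a1 p hp0 ha1pow
  set A2 : Ext f hf := cmm A1 A with hA2def
  set A3 : Ext f hf := cmm A2 A with hA3def
  set A4 : Ext f hf := cmm A3 A with hA4def
  set A5 : Ext f hf := cmm A2 A3 with hA5def
  have hA2g : A2.g = a2 := by rw [hA2def, Ext.cmm_g, hAg, hA1g, hr1]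
  have hA3g : A3.g = a3 := by rw [hA3def, Ext.cmm_g, hAg, hA2g, hr2]
  have hA4g : A4.g = a4 := by rw [hA4def, Ext.cmm_g, hAg, hA3g, hr3]
  have hA5g : A5.g = a5 := by rw [hA5def, Ext.cmm_g, hA2g, hA3g, hr4]
  -- commuting lifts of commuting generator pairs
  have hcA_A4 : Commute A A4 := hC _ _ (by rw [hAg, hA4g]; exact hc7)
  have hcA_A5 : Commute A A5 := hC _ _ (by rw [hAg, hA5g]; exact hc8)
  have hcA1_A2 : Commute A1 A2 := hC _ _ (by rw [hA1g, hA2g]; exact hc9)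
  have hcA1_A5 : Commute A1 A5 := hC _ _ (by rw [hA1g, hA5g]; exact hc10)
  have hcA2_A4 : Commute A2 A4 := hC _ _ (by rw [hA2g, hA4g]; exact hc11)
  have hcA2_A5 : Commute A2 A5 := hC _ _ (by rw [hA2g, hA5g]; exact hc12)
  have hcA3_A4 : Commute A3 A4 := hC _ _ (by rw [hA3g, hA4g]; exact hc13)
  have hcA3_A5 : Commute A3 A5 := hC _ _ (by rw [hA3g, hA5g]; exact hc14)
  have hcA4_A5 : Commute A4 A5 := hC _ _ (by rw [hA4g, hA5g]; exact hc15)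
  -- Goal 1a : [A3, A1] = A5
  have hG1 : cmm a3 (a2 * a1) = 1 := by
    rw [cmm_mul_right, hr5, cmm_swap a2 a3, hr4,
      conj_eq_of_commute (hc10.symm.inv_left), mul_inv_cancel]
  have hE1 : cmm A3 (A2 * A1) = 1 := by
    refine commute_iff_cmm.mp (hC _ _ ?_)
    rw [Ext.mul_g, hA3g, hA2g, hA1g]
    exact commute_iff_cmm.mpr hG1
  have hF5A1 : Commute (cmm A3 A2) A1 := by
    refine hC _ _ ?_
    rw [Ext.cmm_g, hA3g, hA2g, hA1g, cmm_swap a2 a3, hr4]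
    exact hc10.symm.inv_left
  have h1a : cmm A3 A1 = A5 := by
    rw [cmm_mul_right, conj_eq_of_commute hF5A1] at hE1
    have h := mul_eq_one_iff_eq_inv.mp hE1
    rw [h, cmm_swap A2 A3, inv_inv]
  -- Goal 1b : [A4, A1] = A5
  have hG2 : cmm (a4 * a3⁻¹) a1 = 1 := by
    rw [cmm_mul_left, hr6, cmm_inv_left, hr5, inv_inv,
      conj_eq_of_commute' (hc14.symm), conj_eq_of_commute' (hc14.symm.inv_left),
      mul_inv_cancel]
  have hE2 : cmm (A4 * A3⁻¹) A1 = 1 := by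
    refine commute_iff_cmm.mp (hC _ _ ?_)
    rw [Ext.mul_g, Ext.inv_g, hA4g, hA3g, hA1g]
    exact commute_iff_cmm.mpr hG2
  have hX41 : Commute (cmm A4 A1) A3 := by
    refine hC _ _ ?_
    rw [Ext.cmm_g, hA4g, hA1g, hA3g, hr6]
    exact hc14.symm
  have h1b : cmm A4 A1 = A5 := by
    rw [cmm_mul_left, cmm_inv_left, h1a, inv_inv,
      conj_eq_of_commute' hX41, conj_eq_of_commute' (hcA3_A5.symm.inv_left)] at hE2
    exact mul_inv_eq_one.mp hE2
  -- p-th powers of the lifted commutators vanish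
  have hA4p : A4 ^ p = 1 := by
    have h := cmm_pow1 (x := A3) (y := A) (by rw [← hA4def]; exact hcA_A4.symm) p
    rw [hAp, cmm_one_right, ← hA4def] at h
    exact h.symm
  have hA5p : A5 ^ p = 1 := by
    have h := cmm_pow1 (x := A3) (y := A1) (by rw [h1a]; exact hcA1_A5.symm) p
    rw [hA1p, cmm_one_right, h1a] at h
    exact h.symm
  obtain ⟨k2, hk2⟩ := hp.dvd_choose_self (two_ne_zero) (by omega)
  obtain ⟨k3, hk3⟩ := hp.dvd_choose_self (three_ne_zero) (by omega)
  have hA3p : A3 ^ p = 1 := by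
    have h := cmm_pow2 hA3def hA4def hcA_A4.symm hcA3_A4.symm p
    rw [hAp, cmm_one_right, hk2, pow_mul, hA4p, one_pow, mul_one] at h
    exact h.symm
  have hF5 : cmm A3 A2 = A5⁻¹ := by
    rw [cmm_swap A2 A3, ← hA5def]
  have hA2p : A2 ^ p = 1 := by
    have h := cmm_pow3 hA2def hA3def hA4def hF5.symm hcA_A4.symm hcA3_A4.symm
      (hcA_A5.symm.inv_left) (hcA2_A5.symm.inv_left) (hcA3_A5.symm.inv_left)
      (hcA4_A5.symm.inv_left) p
    rw [hAp, cmm_one_right, hk2, hk3, pow_mul A3, pow_mul A4, pow_mul (A5⁻¹),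
      hA3p, hA4p, inv_pow, hA5p, inv_one, one_pow, one_pow, mul_one, one_mul, mul_one] at h
    exact h.symm
  -- the lifting of generators
  let L : Gen → Ext f hf := fun x => match x with
    | .a => A | .a1 => A1 | .a2 => A2 | .a3 => A3 | .a4 => A4 | .a5 => A5
  have hLa : FreeGroup.lift L (of Gen.a) = A := FreeGroup.lift_apply_of
  have hLa1 : FreeGroup.lift L (of Gen.a1) = A1 := FreeGroup.lift_apply_of
  have hLa2 : FreeGroup.lift L (of Gen.a2) = A2 := FreeGroup.lift_apply_of
  have hLa3 : FreeGroup.lift L (of Gen.a3) = A3 := FreeGroup.lift_apply_of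
  have hLa4 : FreeGroup.lift L (of Gen.a4) = A4 := FreeGroup.lift_apply_of
  have hLa5 : FreeGroup.lift L (of Gen.a5) = A5 := FreeGroup.lift_apply_of
  have hlifts : ∀ r ∈ rels p, FreeGroup.lift L r = 1 := by
    intro r hr
    simp only [rels, Set.mem_insert_iff, Set.mem_singleton_iff] at hr
    rcases hr with rfl|rfl|rfl|rfl|rfl|rfl|rfl|rfl|rfl|rfl|rfl|rfl|rfl|rfl|rfl|rfl|rfl|rfl|rfl|rfl|rfl
    · rw [_root_.map_mul, map_c, _root_.map_inv, hLa1, hLa, hLa2, ← hA2def, mul_inv_cancel]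
    · rw [_root_.map_mul, map_c, _root_.map_inv, hLa2, hLa, hLa3, ← hA3def, mul_inv_cancel]
    · rw [_root_.map_mul, map_c, _root_.map_inv, hLa3, hLa, hLa4, ← hA4def, mul_inv_cancel]
    · rw [_root_.map_mul, map_c, _root_.map_inv, hLa2, hLa3, hLa5, ← hA5def, mul_inv_cancel]
    · rw [_root_.map_mul, map_c, _root_.map_inv, hLa3, hLa1, hLa5, h1a, mul_inv_cancel]
    · rw [_root_.map_mul, map_c, _root_.map_inv, hLa4, hLa1, hLa5, h1b, mul_inv_cancel]
    · rw [map_c, hLa, hLa4]; exact commute_iff_cmm.mp hcA_A4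
    · rw [map_c, hLa, hLa5]; exact commute_iff_cmm.mp hcA_A5
    · rw [map_c, hLa1, hLa2]; exact commute_iff_cmm.mp hcA1_A2
    · rw [map_c, hLa1, hLa5]; exact commute_iff_cmm.mp hcA1_A5
    · rw [map_c, hLa2, hLa4]; exact commute_iff_cmm.mp hcA2_A4
    · rw [map_c, hLa2, hLa5]; exact commute_iff_cmm.mp hcA2_A5
    · rw [map_c, hLa3, hLa4]; exact commute_iff_cmm.mp hcA3_A4
    · rw [map_c, hLa3, hLa5]; exact commute_iff_cmm.mp hcA3_A5
    · rw [map_c, hLa4, hLa5]; exact commute_iff_cmm.mp hcA4_A5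
    · rw [_root_.map_pow, hLa]; exact hAp
    · rw [_root_.map_pow, hLa1]; exact hA1p
    · rw [_root_.map_pow, hLa2]; exact hA2p
    · rw [_root_.map_pow, hLa3]; exact hA3p
    · rw [_root_.map_pow, hLa4]; exact hA4p
    · rw [_root_.map_pow, hLa5]; exact hA5p
  -- the homomorphic section
  let s : PresentedGroup (rels p) →* Ext f hf := PresentedGroup.toGroup hlifts
  have hπs : (Ext.π (f := f) (hf := hf)).comp s = MonoidHom.id _ := by
    apply PresentedGroup.ext
    intro x
    have hs_of : s (PresentedGroup.of x) = L x := PresentedGroup.toGroup.of hlifts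
    cases x
    · show Ext.π (s (PresentedGroup.of Gen.a)) = PresentedGroup.of Gen.a
      rw [hs_of, Ext.π_apply]; exact hAg
    · show Ext.π (s (PresentedGroup.of Gen.a1)) = PresentedGroup.of Gen.a1
      rw [hs_of, Ext.π_apply]; exact hA1g
    · show Ext.π (s (PresentedGroup.of Gen.a2)) = PresentedGroup.of Gen.a2
      rw [hs_of, Ext.π_apply]; exact hA2g
    · show Ext.π (s (PresentedGroup.of Gen.a3)) = PresentedGroup.of Gen.a3
      rw [hs_of, Ext.π_apply]; exact hA3g
    · show Ext.π (s (PresentedGroup.of Gen.a4)) = PresentedGroup.of Gen.a4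
      rw [hs_of, Ext.π_apply]; exact hA4g
    · show Ext.π (s (PresentedGroup.of Gen.a5)) = PresentedGroup.of Gen.a5
      rw [hs_of, Ext.π_apply]; exact hA5g
  have hsg : ∀ x : PresentedGroup (rels p), (s x).g = x := by
    intro x
    have := DFunLike.congr_fun hπs x
    simpa using this
  -- conclude
  refine ⟨fun g => - (s g).z, ?_⟩
  intro g h
  have hm := congrArg Ext.z (map_mul s g h)
  rw [Ext.mul_z, hsg, hsg] at hm
  have hfor : f g h = (s (g * h)).z - (s g).z - (s h).z := by rw [hm]; abel
  rw [hfor]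
  simp only [neg_neg, sub_neg_eq_add]
  abel


end Stmt12
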